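/- Assume (H1) and (H2), and let φ=(u,v,z) be a solution of the Gray–Scott lattice system on [t_0,∞) with symbol σ_0∈𝕋^κ. Set θ_1 = min{(3/2)λ − (μ−1/2)k, λ/2, (3/2)λ + ((μ/2−1)k)/μ²} and R_0² = λ‖a‖² + (2ακc_1²π²/(λ+k))‖b_1‖² + (2κc_2²π²/λ)‖b_2‖² + (2μακc_3²π²/(μλ+k))‖b_3‖². Then θ_1>0 and for all t≥t_0: α‖u(t)‖² + ‖v(t)‖² + α‖z(t)‖² ≤ e^{−θ_1(t−t_0)}(α‖u(t_0)‖² + ‖v(t_0)‖² + α‖z(t_0)‖²) + R_0²/θ_1. Consequently, with δ_1=min{1,α} and δ_2=max{1,α}, ‖φ(t)‖²_E ≤ (δ_2/δ_1) e^{−θ_1(t−t_0)} ‖φ(t_0)‖²_E + R_0²/(θ_1 δ_1) for all t≥t_0. -/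

import Mathlib

noncomputable section

open scoped Real

/-- `ℓ²`, the Hilbert space of square-summable real sequences indexed by `ℤ`. -/
abbrev ell2 : Type := lp (fun _ : ℤ => ℝ) 2

/-- The phase space `E = ℓ² × ℓ² × ℓ²`. -/
abbrev GSE : Type := ell2 × ell2 × ell2

/-- The squared `E`-norm `‖(u,v,z)‖²_E = ‖u‖² + ‖v‖² + ‖z‖²`. -/
def enormSq (p : GSE) : ℝ := ‖p.1‖ ^ 2 + ‖p.2.1‖ ^ 2 + ‖p.2.2‖ ^ 2

/-- The `κ`-dimensional torus `𝕋^κ = (ℝ/2πℤ)^κ`. -/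
abbrev Torus (κ : ℕ) : Type := Fin κ → AddCircle (2 * π)

/-- The distance on `𝕋^κ` induced from `ℝ^κ`: `‖σ₁ − σ₂‖_{𝕋^κ} = (Σ_i ‖σ₁ᵢ − σ₂ᵢ‖²)^{1/2}`. -/
def tDist {κ : ℕ} (σ₁ σ₂ : Torus κ) : ℝ := Real.sqrt (∑ i, ‖σ₁ i - σ₂ i‖ ^ 2)

/-- The translation flow on the torus: `θ_t σ = (x t + σ) mod 𝕋^κ`. -/
def θtorus {κ : ℕ} (x : Fin κ → ℝ) (t : ℝ) (σ : Torus κ) : Torus κ :=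
  fun i => ((t * x i : ℝ) : AddCircle (2 * π)) + σ i

/-- `φ : ℝ → E` is a solution of the nonautonomous discrete Gray–Scott system with
symbol `σ₀` (symbol path `σ(t) = θ_t σ₀`) and initial time `t₀`: it is continuous on
`[t₀,∞)`, continuously differentiable on `(t₀,∞)`, and satisfies, componentwise for
every `m ∈ ℤ` and every `t > t₀`,
`u' = −d₁Au − (λ+k)u + u²v − αu³ + βz + b₁f₁(σ(t))`,
`v' = −d₂Av + λ(a−v) − u²v + αu³ + b₂f₂(σ(t))`,
`z' = −d₃Az + ku − (λ+β)z + b₃f₃(σ(t))`, where `(Aw)_m = 2w_m − w_{m+1} − w_{m−1}`. -/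
def IsGSSolution {κ : ℕ} (d₁ d₂ d₃ k α β lam : ℝ) (a b₁ b₂ b₃ : ell2)
    (f₁ f₂ f₃ : ℤ → Torus κ → ℝ) (x : Fin κ → ℝ) (σ₀ : Torus κ) (t₀ : ℝ)
    (φ : ℝ → GSE) : Prop :=
  ContinuousOn φ (Set.Ici t₀) ∧
  ∃ φ' : ℝ → GSE, ContinuousOn φ' (Set.Ioi t₀) ∧
    ∀ t ∈ Set.Ioi t₀,
      HasDerivAt φ (φ' t) t ∧
      ∀ m : ℤ,
        ((φ' t).1 m =
          -d₁ * (2 * (φ t).1 m - (φ t).1 (m + 1) - (φ t).1 (m - 1))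
            - (lam + k) * (φ t).1 m + ((φ t).1 m) ^ 2 * (φ t).2.1 m
            - α * ((φ t).1 m) ^ 3 + β * (φ t).2.2 m
            + b₁ m * f₁ m (θtorus x t σ₀)) ∧
        ((φ' t).2.1 m =
          -d₂ * (2 * (φ t).2.1 m - (φ t).2.1 (m + 1) - (φ t).2.1 (m - 1))
            + lam * (a m - (φ t).2.1 m) - ((φ t).1 m) ^ 2 * (φ t).2.1 m
            + α * ((φ t).1 m) ^ 3
            + b₂ m * f₂ m (θtorus x t σ₀)) ∧
        ((φ' t).2.2 m =
          -d₃ * (2 * (φ t).2.2 m - (φ t).2.2 (m + 1) - (φ t).2.2 (m - 1))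
            + k * (φ t).1 m - (lam + β) * (φ t).2.2 m
            + b₃ m * f₃ m (θtorus x t σ₀))


open scoped RealInnerProductSpace
open Set Filter Topology

section GSAux

lemma ell2_summable_sq (u : ell2) : Summable (fun m => u m ^ 2) := by
  have h := lp.summable_inner (𝕜 := ℝ) u u
  exact h.congr fun m => by simp [RCLike.inner_apply, sq]

lemma ell2_inner_eq (u v : ell2) : ⟪u, v⟫ = ∑' m, u m * v m := by
  rw [lp.inner_eq_tsum]
  exact tsum_congr fun m => by simp [RCLike.inner_apply]; ring

lemma ell2_norm_sq (u : ell2) : ‖u‖ ^ 2 = ∑' m, u m ^ 2 := by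
  rw [← real_inner_self_eq_norm_sq, ell2_inner_eq]
  exact tsum_congr fun m => (sq _).symm

lemma summable_mul_of_sq {f g : ℤ → ℝ} (hf : Summable fun m => f m ^ 2)
    (hg : Summable fun m => g m ^ 2) : Summable fun m => f m * g m := by
  refine Summable.of_abs (Summable.of_nonneg_of_le (fun m => abs_nonneg _)
    (fun m => ?_) ((hf.add hg).div_const 2))
  rw [abs_mul]
  nlinarith [sq_nonneg (|f m| - |g m|), sq_abs (f m), sq_abs (g m), abs_nonneg (f m),
    abs_nonneg (g m)]

lemma ell2_summable_mul (u w : ell2) : Summable fun m => u m * w m :=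
  summable_mul_of_sq (ell2_summable_sq u) (ell2_summable_sq w)

lemma summable_shift {f : ℤ → ℝ} (hf : Summable f) (c : ℤ) : Summable fun m => f (m + c) :=
  ((Equiv.addRight c).summable_iff (f := f)).2 hf

lemma tsum_shift (f : ℤ → ℝ) (c : ℤ) : ∑' m, f (m + c) = ∑' m, f m :=
  (Equiv.addRight c).tsum_eq f

lemma gs_amgm {ε : ℝ} (hε : 0 < ε) (x y : ℝ) : 2 * x * y ≤ ε * x ^ 2 + y ^ 2 / ε := by
  have h : y ^ 2 / ε * ε = y ^ 2 := div_mul_cancel₀ _ (ne_of_gt hε)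
  nlinarith [sq_nonneg (ε * x - y), hε]

lemma gs_amgm' {c : ℝ} (hc : 0 < c) (x y : ℝ) : 2 * x * y ≤ c / 2 * x ^ 2 + 2 / c * y ^ 2 := by
  have h : c * (2 / c * y ^ 2) = 2 * y ^ 2 := by field_simp
  nlinarith [sq_nonneg (c / 2 * x - y), hc]

lemma summable_uAu (u : ell2) :
    Summable fun m => u m * (2 * u m - u (m + 1) - u (m - 1)) := by
  have hsq := ell2_summable_sq u
  have hsqp : Summable fun m : ℤ => u (m + 1) ^ 2 := summable_shift hsq 1
  have hsqm : Summable fun m : ℤ => u (m - 1) ^ 2 := by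
    simpa [sub_eq_add_neg] using summable_shift hsq (-1)
  have h1 : Summable (fun m : ℤ => 2 * (u m ^ 2) - u m * u (m + 1) - u m * u (m - 1)) :=
    ((hsq.mul_left 2).sub (summable_mul_of_sq hsq hsqp)).sub (summable_mul_of_sq hsq hsqm)
  exact h1.congr fun m => by ring

lemma tsum_uAu_nonneg (u : ell2) :
    0 ≤ ∑' m, u m * (2 * u m - u (m + 1) - u (m - 1)) := by
  have hsq := ell2_summable_sq u
  have hsqp : Summable fun m : ℤ => u (m + 1) ^ 2 := summable_shift hsq 1
  have hsqm : Summable fun m : ℤ => u (m - 1) ^ 2 := by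
    simpa [sub_eq_add_neg] using summable_shift hsq (-1)
  have hp : Summable fun m : ℤ => u m * u (m + 1) := summable_mul_of_sq hsq hsqp
  have hm : Summable fun m : ℤ => u m * u (m - 1) := summable_mul_of_sq hsq hsqm
  have key : ∀ g : ℤ → ℝ, Summable (fun m => g m ^ 2) → (∑' m, g m ^ 2) = (∑' m, u m ^ 2) →
      Summable (fun m => u m * g m) → (∑' m, u m * g m) ≤ ∑' m, u m ^ 2 := by
    intro g hg hgs hpg
    calc (∑' m, u m * g m) ≤ ∑' m, (u m ^ 2 + g m ^ 2) / 2 :=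
          Summable.tsum_le_tsum (fun m => by nlinarith [sq_nonneg (u m - g m)]) hpg
            ((hsq.add hg).div_const 2)
      _ = ∑' m, u m ^ 2 := by
          rw [tsum_div_const, Summable.tsum_add hsq hg, hgs]; ring
  have h1 : (∑' m, u m * u (m + 1)) ≤ ∑' m, u m ^ 2 :=
    key _ hsqp (tsum_shift (fun m => u m ^ 2) 1) hp
  have h2 : (∑' m, u m * u (m - 1)) ≤ ∑' m, u m ^ 2 :=
    key _ hsqm (by simpa [sub_eq_add_neg] using tsum_shift (fun m => u m ^ 2) (-1)) hm
  have hsplit : (∑' m, u m * (2 * u m - u (m + 1) - u (m - 1)))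
      = (∑' m, (2 * u m ^ 2 - u m * u (m + 1) - u m * u (m - 1))) :=
    tsum_congr fun m => by ring
  rw [hsplit, Summable.tsum_sub ((hsq.mul_left 2).sub hp) hm, Summable.tsum_sub (hsq.mul_left 2) hp,
    tsum_mul_left]
  linarith

lemma tdist_zero_le {κ : ℕ} (σ : Torus κ) : tDist σ 0 ≤ Real.sqrt κ * π := by
  have hterm : ∀ i : Fin κ, ‖σ i - (0 : Torus κ) i‖ ^ 2 ≤ π ^ 2 := by
    intro i
    have h1 : ‖σ i - (0 : Torus κ) i‖ ≤ |2 * π| / 2 :=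
      AddCircle.norm_le_half_period (p := 2 * π) (by positivity)
    have h2 : |2 * π| / 2 = π := by
      rw [abs_of_pos (by positivity)]; ring
    nlinarith [norm_nonneg (σ i - (0 : Torus κ) i)]
  calc tDist σ 0 ≤ Real.sqrt (∑ _i : Fin κ, π ^ 2) :=
        Real.sqrt_le_sqrt (Finset.sum_le_sum fun i _ => hterm i)
    _ = Real.sqrt κ * π := by
        rw [Finset.sum_const, Finset.card_univ, Fintype.card_fin, nsmul_eq_mul,
          Real.sqrt_mul (by positivity), Real.sqrt_sq Real.pi_pos.le]

lemma gs_pointwise_bound (k α β lam θ₁ μ : ℝ) (hk : 0 < k) (hα : 0 < α) (hβ : 0 < β)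
    (hlam : 0 < lam) (hμ : μ = k / β)
    (hθu : θ₁ ≤ 3 / 2 * (lam + k) - (k + β) * μ)
    (hθv : θ₁ ≤ lam / 2)
    (hθz : θ₁ ≤ 3 / 2 * (lam + β) - (k + β) / μ)
    (u v z a g1 g2 g3 : ℝ) :
    2 * α * (u * (-(lam + k) * u + u ^ 2 * v - α * u ^ 3 + β * z + g1))
      + 2 * (v * (lam * (a - v) - u ^ 2 * v + α * u ^ 3 + g2))
      + 2 * α * (z * (k * u - (lam + β) * z + g3))
    ≤ -θ₁ * (α * u ^ 2 + v ^ 2 + α * z ^ 2)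
      + (lam * a ^ 2 + 2 * α / (lam + k) * g1 ^ 2 + 2 / lam * g2 ^ 2
         + 2 * α / (lam + β) * g3 ^ 2) := by
  have hμ0 : 0 < μ := hμ ▸ div_pos hk hβ
  have hA : α * (β + k) * (2 * u * z) ≤ α * (β + k) * (μ * u ^ 2 + z ^ 2 / μ) :=
    mul_le_mul_of_nonneg_left (gs_amgm hμ0 u z) (by positivity)
  have hg1 : α * (2 * u * g1) ≤ α * ((lam + k) / 2 * u ^ 2 + 2 / (lam + k) * g1 ^ 2) :=
    mul_le_mul_of_nonneg_left (gs_amgm' (by linarith) u g1) hα.le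
  have hg2 : 2 * v * g2 ≤ lam / 2 * v ^ 2 + 2 / lam * g2 ^ 2 := gs_amgm' hlam v g2
  have hg3 : α * (2 * z * g3) ≤ α * ((lam + β) / 2 * z ^ 2 + 2 / (lam + β) * g3 ^ 2) :=
    mul_le_mul_of_nonneg_left (gs_amgm' (by linarith) z g3) hα.le
  have ha : lam * (2 * v * a) ≤ lam * (v ^ 2 + a ^ 2) := by
    nlinarith [sq_nonneg (v - a), hlam]
  have hθu' : θ₁ * (α * u ^ 2) ≤ (3 / 2 * (lam + k) - (k + β) * μ) * (α * u ^ 2) :=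
    mul_le_mul_of_nonneg_right hθu (by positivity)
  have hθv' : θ₁ * v ^ 2 ≤ lam / 2 * v ^ 2 :=
    mul_le_mul_of_nonneg_right hθv (sq_nonneg v)
  have hθz' : θ₁ * (α * z ^ 2) ≤ (3 / 2 * (lam + β) - (k + β) / μ) * (α * z ^ 2) :=
    mul_le_mul_of_nonneg_right hθz (by positivity)
  have hsq : (0:ℝ) ≤ 2 * (u * (α * u - v)) ^ 2 := by positivity
  have key : (-θ₁ * (α * u ^ 2 + v ^ 2 + α * z ^ 2)
        + (lam * a ^ 2 + 2 * α / (lam + k) * g1 ^ 2 + 2 / lam * g2 ^ 2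
           + 2 * α / (lam + β) * g3 ^ 2))
      - (2 * α * (u * (-(lam + k) * u + u ^ 2 * v - α * u ^ 3 + β * z + g1))
        + 2 * (v * (lam * (a - v) - u ^ 2 * v + α * u ^ 3 + g2))
        + 2 * α * (z * (k * u - (lam + β) * z + g3)))
      = (α * (β + k) * (μ * u ^ 2 + z ^ 2 / μ) - α * (β + k) * (2 * u * z))
        + (α * ((lam + k) / 2 * u ^ 2 + 2 / (lam + k) * g1 ^ 2) - α * (2 * u * g1))
        + ((lam / 2 * v ^ 2 + 2 / lam * g2 ^ 2) - 2 * v * g2)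
        + (α * ((lam + β) / 2 * z ^ 2 + 2 / (lam + β) * g3 ^ 2) - α * (2 * z * g3))
        + (lam * (v ^ 2 + a ^ 2) - lam * (2 * v * a))
        + ((3 / 2 * (lam + k) - (k + β) * μ) * (α * u ^ 2) - θ₁ * (α * u ^ 2))
        + (lam / 2 * v ^ 2 - θ₁ * v ^ 2)
        + ((3 / 2 * (lam + β) - (k + β) / μ) * (α * z ^ 2) - θ₁ * (α * z ^ 2))
        + 2 * (u * (α * u - v)) ^ 2 := by ring
  linarith [hsq, hA, hg1, hg2, hg3, ha, hθu', hθv', hθz', key]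

set_option maxHeartbeats 2000000 in
lemma gs_energy_inner_bound
    (d₁ d₂ d₃ k α β lam θ₁ μ B1 B2 B3 : ℝ)
    (hd₁ : 0 < d₁) (hd₂ : 0 < d₂) (hd₃ : 0 < d₃)
    (hk : 0 < k) (hα : 0 < α) (hβ : 0 < β) (hlam : 0 < lam)
    (hμ : μ = k / β)
    (hθu : θ₁ ≤ 3 / 2 * (lam + k) - (k + β) * μ)
    (hθv : θ₁ ≤ lam / 2)
    (hθz : θ₁ ≤ 3 / 2 * (lam + β) - (k + β) / μ)
    (a b₁ b₂ b₃ u v z u' v' z' : ell2) (g1 g2 g3 : ℤ → ℝ)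
    (hB1 : 0 ≤ B1) (hB2 : 0 ≤ B2) (hB3 : 0 ≤ B3)
    (hg1 : ∀ m, g1 m ^ 2 ≤ B1 * b₁ m ^ 2)
    (hg2 : ∀ m, g2 m ^ 2 ≤ B2 * b₂ m ^ 2)
    (hg3 : ∀ m, g3 m ^ 2 ≤ B3 * b₃ m ^ 2)
    (hu' : ∀ m, u' m = -d₁ * (2 * u m - u (m + 1) - u (m - 1)) - (lam + k) * u m
        + u m ^ 2 * v m - α * u m ^ 3 + β * z m + g1 m)
    (hv' : ∀ m, v' m = -d₂ * (2 * v m - v (m + 1) - v (m - 1)) + lam * (a m - v m)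
        - u m ^ 2 * v m + α * u m ^ 3 + g2 m)
    (hz' : ∀ m, z' m = -d₃ * (2 * z m - z (m + 1) - z (m - 1)) + k * u m
        - (lam + β) * z m + g3 m) :
    2 * α * ⟪u, u'⟫ + 2 * ⟪v, v'⟫ + 2 * α * ⟪z, z'⟫ ≤
      -θ₁ * (α * ‖u‖ ^ 2 + ‖v‖ ^ 2 + α * ‖z‖ ^ 2)
      + (lam * ‖a‖ ^ 2 + 2 * α / (lam + k) * B1 * ‖b₁‖ ^ 2 + 2 / lam * B2 * ‖b₂‖ ^ 2
         + 2 * α / (lam + β) * B3 * ‖b₃‖ ^ 2) := by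
  set r1 : ℤ → ℝ := fun m => -(lam + k) * u m + u m ^ 2 * v m - α * u m ^ 3 + β * z m + g1 m
    with hr1
  set r2 : ℤ → ℝ := fun m => lam * (a m - v m) - u m ^ 2 * v m + α * u m ^ 3 + g2 m with hr2
  set r3 : ℤ → ℝ := fun m => k * u m - (lam + β) * z m + g3 m with hr3
  have hAu := summable_uAu u
  have hAv := summable_uAu v
  have hAz := summable_uAu z
  have hur1 : Summable fun m => u m * r1 m := by
    have he : (fun m => u m * r1 m)
        = fun m => u m * u' m + d₁ * (u m * (2 * u m - u (m + 1) - u (m - 1))) :=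
      funext fun m => by rw [hr1]; simp only []; rw [hu' m]; ring
    rw [he]; exact (ell2_summable_mul u u').add (hAu.mul_left d₁)
  have hvr2 : Summable fun m => v m * r2 m := by
    have he : (fun m => v m * r2 m)
        = fun m => v m * v' m + d₂ * (v m * (2 * v m - v (m + 1) - v (m - 1))) :=
      funext fun m => by rw [hr2]; simp only []; rw [hv' m]; ring
    rw [he]; exact (ell2_summable_mul v v').add (hAv.mul_left d₂)
  have hzr3 : Summable fun m => z m * r3 m := by
    have he : (fun m => z m * r3 m)
        = fun m => z m * z' m + d₃ * (z m * (2 * z m - z (m + 1) - z (m - 1))) :=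
      funext fun m => by rw [hr3]; simp only []; rw [hz' m]; ring
    rw [he]; exact (ell2_summable_mul z z').add (hAz.mul_left d₃)
  have hinneru : ⟪u, u'⟫ = -d₁ * (∑' m, u m * (2 * u m - u (m + 1) - u (m - 1)))
      + ∑' m, u m * r1 m := by
    rw [ell2_inner_eq]
    have he : (fun m => u m * u' m)
        = fun m => -d₁ * (u m * (2 * u m - u (m + 1) - u (m - 1))) + u m * r1 m :=
      funext fun m => by rw [hr1]; simp only []; rw [hu' m]; ring
    rw [he, Summable.tsum_add (hAu.mul_left (-d₁)) hur1, tsum_mul_left]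
  have hinnerv : ⟪v, v'⟫ = -d₂ * (∑' m, v m * (2 * v m - v (m + 1) - v (m - 1)))
      + ∑' m, v m * r2 m := by
    rw [ell2_inner_eq]
    have he : (fun m => v m * v' m)
        = fun m => -d₂ * (v m * (2 * v m - v (m + 1) - v (m - 1))) + v m * r2 m :=
      funext fun m => by rw [hr2]; simp only []; rw [hv' m]; ring
    rw [he, Summable.tsum_add (hAv.mul_left (-d₂)) hvr2, tsum_mul_left]
  have hinnerz : ⟪z, z'⟫ = -d₃ * (∑' m, z m * (2 * z m - z (m + 1) - z (m - 1)))
      + ∑' m, z m * r3 m := by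
    rw [ell2_inner_eq]
    have he : (fun m => z m * z' m)
        = fun m => -d₃ * (z m * (2 * z m - z (m + 1) - z (m - 1))) + z m * r3 m :=
      funext fun m => by rw [hr3]; simp only []; rw [hz' m]; ring
    rw [he, Summable.tsum_add (hAz.mul_left (-d₃)) hzr3, tsum_mul_left]
  have hTu := tsum_uAu_nonneg u
  have hTv := tsum_uAu_nonneg v
  have hTz := tsum_uAu_nonneg z
  have hdrop : 2 * α * ⟪u, u'⟫ + 2 * ⟪v, v'⟫ + 2 * α * ⟪z, z'⟫ ≤
      2 * α * (∑' m, u m * r1 m) + 2 * (∑' m, v m * r2 m) + 2 * α * (∑' m, z m * r3 m) := by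
    rw [hinneru, hinnerv, hinnerz]
    have h1 : 0 ≤ 2 * α * (d₁ * ∑' m, u m * (2 * u m - u (m + 1) - u (m - 1))) := by
      have := mul_nonneg hd₁.le hTu; positivity
    have h2 : 0 ≤ 2 * (d₂ * ∑' m, v m * (2 * v m - v (m + 1) - v (m - 1))) := by
      have := mul_nonneg hd₂.le hTv; positivity
    have h3 : 0 ≤ 2 * α * (d₃ * ∑' m, z m * (2 * z m - z (m + 1) - z (m - 1))) := by
      have := mul_nonneg hd₃.le hTz; positivity
    nlinarith [h1, h2, h3]
  refine hdrop.trans ?_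
  have hcomb : 2 * α * (∑' m, u m * r1 m) + 2 * (∑' m, v m * r2 m)
      + 2 * α * (∑' m, z m * r3 m)
      = ∑' m, (2 * α * (u m * r1 m) + 2 * (v m * r2 m) + 2 * α * (z m * r3 m)) := by
    rw [Summable.tsum_add ((hur1.mul_left (2 * α)).add (hvr2.mul_left 2)) (hzr3.mul_left (2 * α)),
      Summable.tsum_add (hur1.mul_left (2 * α)) (hvr2.mul_left 2), tsum_mul_left, tsum_mul_left,
      tsum_mul_left]
  rw [hcomb]
  have hsqu := ell2_summable_sq u
  have hsqv := ell2_summable_sq v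
  have hsqz := ell2_summable_sq z
  have hsqa := ell2_summable_sq a
  have hg1s : Summable fun m => g1 m ^ 2 :=
    Summable.of_nonneg_of_le (fun m => sq_nonneg _) hg1 ((ell2_summable_sq b₁).mul_left B1)
  have hg2s : Summable fun m => g2 m ^ 2 :=
    Summable.of_nonneg_of_le (fun m => sq_nonneg _) hg2 ((ell2_summable_sq b₂).mul_left B2)
  have hg3s : Summable fun m => g3 m ^ 2 :=
    Summable.of_nonneg_of_le (fun m => sq_nonneg _) hg3 ((ell2_summable_sq b₃).mul_left B3)
  have hsum1 : Summable fun m => -θ₁ * (α * u m ^ 2 + v m ^ 2 + α * z m ^ 2) :=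
    (((hsqu.mul_left α).add hsqv).add (hsqz.mul_left α)).mul_left (-θ₁)
  have hsum2 : Summable fun m => lam * a m ^ 2 + 2 * α / (lam + k) * g1 m ^ 2
      + 2 / lam * g2 m ^ 2 + 2 * α / (lam + β) * g3 m ^ 2 :=
    (((hsqa.mul_left lam).add (hg1s.mul_left (2 * α / (lam + k)))).add
      (hg2s.mul_left (2 / lam))).add (hg3s.mul_left (2 * α / (lam + β)))
  have hsumw : Summable fun m => -θ₁ * (α * u m ^ 2 + v m ^ 2 + α * z m ^ 2)
      + (lam * a m ^ 2 + 2 * α / (lam + k) * g1 m ^ 2 + 2 / lam * g2 m ^ 2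
        + 2 * α / (lam + β) * g3 m ^ 2) := hsum1.add hsum2
  have hsumh : Summable fun m => 2 * α * (u m * r1 m) + 2 * (v m * r2 m)
      + 2 * α * (z m * r3 m) :=
    ((hur1.mul_left (2 * α)).add (hvr2.mul_left 2)).add (hzr3.mul_left (2 * α))
  have hle : (∑' m, (2 * α * (u m * r1 m) + 2 * (v m * r2 m) + 2 * α * (z m * r3 m)))
      ≤ ∑' m, (-θ₁ * (α * u m ^ 2 + v m ^ 2 + α * z m ^ 2)
        + (lam * a m ^ 2 + 2 * α / (lam + k) * g1 m ^ 2 + 2 / lam * g2 m ^ 2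
          + 2 * α / (lam + β) * g3 m ^ 2)) := by
    refine Summable.tsum_le_tsum (fun m => ?_) hsumh hsumw
    exact gs_pointwise_bound k α β lam θ₁ μ hk hα hβ hlam hμ hθu hθv hθz
      (u m) (v m) (z m) (a m) (g1 m) (g2 m) (g3 m)
  refine hle.trans ?_
  have e1 : (∑' m, (α * u m ^ 2 + v m ^ 2 + α * z m ^ 2))
      = α * ‖u‖ ^ 2 + ‖v‖ ^ 2 + α * ‖z‖ ^ 2 := by
    rw [Summable.tsum_add ((hsqu.mul_left α).add hsqv) (hsqz.mul_left α),
      Summable.tsum_add (hsqu.mul_left α) hsqv, tsum_mul_left, tsum_mul_left,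
      ell2_norm_sq u, ell2_norm_sq v, ell2_norm_sq z]
  have e2 : (∑' m, (lam * a m ^ 2 + 2 * α / (lam + k) * g1 m ^ 2 + 2 / lam * g2 m ^ 2
        + 2 * α / (lam + β) * g3 m ^ 2))
      = lam * ‖a‖ ^ 2 + 2 * α / (lam + k) * (∑' m, g1 m ^ 2) + 2 / lam * (∑' m, g2 m ^ 2)
        + 2 * α / (lam + β) * (∑' m, g3 m ^ 2) := by
    rw [Summable.tsum_add (((hsqa.mul_left lam).add (hg1s.mul_left (2 * α / (lam + k)))).add
        (hg2s.mul_left (2 / lam))) (hg3s.mul_left (2 * α / (lam + β))),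
      Summable.tsum_add ((hsqa.mul_left lam).add (hg1s.mul_left (2 * α / (lam + k))))
        (hg2s.mul_left (2 / lam)),
      Summable.tsum_add (hsqa.mul_left lam) (hg1s.mul_left (2 * α / (lam + k))),
      tsum_mul_left, tsum_mul_left, tsum_mul_left, tsum_mul_left, ell2_norm_sq a]
  rw [Summable.tsum_add hsum1 hsum2, tsum_mul_left, e1, e2]
  have h1 : (∑' m, g1 m ^ 2) ≤ B1 * ‖b₁‖ ^ 2 := by
    rw [ell2_norm_sq b₁, ← tsum_mul_left]
    exact Summable.tsum_le_tsum hg1 hg1s ((ell2_summable_sq b₁).mul_left B1)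
  have h2 : (∑' m, g2 m ^ 2) ≤ B2 * ‖b₂‖ ^ 2 := by
    rw [ell2_norm_sq b₂, ← tsum_mul_left]
    exact Summable.tsum_le_tsum hg2 hg2s ((ell2_summable_sq b₂).mul_left B2)
  have h3 : (∑' m, g3 m ^ 2) ≤ B3 * ‖b₃‖ ^ 2 := by
    rw [ell2_norm_sq b₃, ← tsum_mul_left]
    exact Summable.tsum_le_tsum hg3 hg3s ((ell2_summable_sq b₃).mul_left B3)
  have hc1 : 0 ≤ 2 * α / (lam + k) := by positivity
  have hc2 : 0 ≤ 2 / lam := by positivity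
  have hc3 : 0 ≤ 2 * α / (lam + β) := by positivity
  nlinarith [mul_le_mul_of_nonneg_left h1 hc1, mul_le_mul_of_nonneg_left h2 hc2,
    mul_le_mul_of_nonneg_left h3 hc3]

lemma gs_hasDerivAt_normSq {w : ℝ → ell2} {w' : ell2} {t : ℝ} (h : HasDerivAt w w' t) :
    HasDerivAt (fun s => ‖w s‖ ^ 2) (2 * ⟪w t, w'⟫) t := by
  have h2 := HasDerivAt.inner (𝕜 := ℝ) h h
  have e : ⟪w t, w'⟫ + ⟪w', w t⟫ = 2 * ⟪w t, w'⟫ := by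
    rw [real_inner_comm w' (w t)]; ring
  simp only [real_inner_self_eq_norm_sq] at h2
  rw [← e]; exact h2

end GSAux

set_option maxHeartbeats 1000000 in
/-- Under (H1)–(H2), every solution `φ = (u,v,z)` of the Gray–Scott
lattice system satisfies, with `θ₁ = min{(3/2)λ−(μ−1/2)k, λ/2, (3/2)λ+((μ/2−1)k)/μ²}`
(`μ = k/β`) and `R₀²` as below: `θ₁ > 0` and for all `t ≥ t₀`,
`α‖u(t)‖² + ‖v(t)‖² + α‖z(t)‖² ≤ e^{−θ₁(t−t₀)}(α‖u(t₀)‖² + ‖v(t₀)‖² + α‖z(t₀)‖²) + R₀²/θ₁`;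
consequently `‖φ(t)‖²_E ≤ (δ₂/δ₁)e^{−θ₁(t−t₀)}‖φ(t₀)‖²_E + R₀²/(θ₁δ₁)` with
`δ₁ = min{1,α}`, `δ₂ = max{1,α}`. -/
theorem stmt_9
    {κ : ℕ} (d₁ d₂ d₃ k α β lam : ℝ)
    (hd₁ : 0 < d₁) (hd₂ : 0 < d₂) (hd₃ : 0 < d₃)
    (hk : 0 < k) (hα : 0 < α) (hβ : 0 < β) (hlam : 0 < lam)
    (a b₁ b₂ b₃ : ell2)
    -- (H1): `2β < k < min{3λ/(2μ−1), β+λ}` where `μ = k/β`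
    (hH1a : 2 * β < k)
    (hH1b : k < min (3 * lam / (2 * (k / β) - 1)) (β + lam))
    (f₁ f₂ f₃ : ℤ → Torus κ → ℝ) (c₁ c₂ c₃ : ℝ)
    (hc₁ : 0 < c₁) (hc₂ : 0 < c₂) (hc₃ : 0 < c₃)
    -- (H2): `f_{im}(0) = 0` and `f_{im}` is `c_i`-Lipschitz on `𝕋^κ`
    (hf₁0 : ∀ m, f₁ m 0 = 0) (hf₂0 : ∀ m, f₂ m 0 = 0) (hf₃0 : ∀ m, f₃ m 0 = 0)
    (hf₁lip : ∀ m σ σ', |f₁ m σ - f₁ m σ'| ≤ c₁ * tDist σ σ')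
    (hf₂lip : ∀ m σ σ', |f₂ m σ - f₂ m σ'| ≤ c₂ * tDist σ σ')
    (hf₃lip : ∀ m σ σ', |f₃ m σ - f₃ m σ'| ≤ c₃ * tDist σ σ')
    (x : Fin κ → ℝ)
    -- the constants `θ₁` and `R₀²` (with `μ = k/β`)
    (θ₁ : ℝ)
    (hθ₁ : θ₁ = min (3 / 2 * lam - (k / β - 1 / 2) * k)
        (min (lam / 2) (3 / 2 * lam + ((k / β) / 2 - 1) * k / (k / β) ^ 2)))
    (R₀sq : ℝ)
    (hR₀sq : R₀sq = lam * ‖a‖ ^ 2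
        + (2 * α * κ * c₁ ^ 2 * π ^ 2 / (lam + k)) * ‖b₁‖ ^ 2
        + (2 * κ * c₂ ^ 2 * π ^ 2 / lam) * ‖b₂‖ ^ 2
        + (2 * (k / β) * α * κ * c₃ ^ 2 * π ^ 2 / ((k / β) * lam + k)) * ‖b₃‖ ^ 2)
    (t₀ : ℝ) (σ₀ : Torus κ) (φ : ℝ → GSE)
    (hφ : IsGSSolution d₁ d₂ d₃ k α β lam a b₁ b₂ b₃ f₁ f₂ f₃ x σ₀ t₀ φ) :
    0 < θ₁ ∧
    (∀ t ≥ t₀,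
      α * ‖(φ t).1‖ ^ 2 + ‖(φ t).2.1‖ ^ 2 + α * ‖(φ t).2.2‖ ^ 2 ≤
        Real.exp (-θ₁ * (t - t₀)) *
            (α * ‖(φ t₀).1‖ ^ 2 + ‖(φ t₀).2.1‖ ^ 2 + α * ‖(φ t₀).2.2‖ ^ 2)
          + R₀sq / θ₁) ∧
    (∀ t ≥ t₀,
      enormSq (φ t) ≤
        max 1 α / min 1 α * Real.exp (-θ₁ * (t - t₀)) * enormSq (φ t₀)
          + R₀sq / (θ₁ * min 1 α)) := by
  obtain ⟨hφc, φ', hφ'c, hsol⟩ := hφ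
  have hβ0 : β ≠ 0 := ne_of_gt hβ
  have hk0 : k ≠ 0 := ne_of_gt hk
  have hlam0 : lam ≠ 0 := ne_of_gt hlam
  have hμpos : 0 < k / β := div_pos hk hβ
  have hμ2 : 2 < k / β := by rw [lt_div_iff₀ hβ]; linarith
  -- θ₁ is positive
  have hθ₁pos : 0 < θ₁ := by
    rw [hθ₁]
    refine lt_min ?_ (lt_min (by linarith) ?_)
    · have hk1 : k < 3 * lam / (2 * (k / β) - 1) := (lt_min_iff.1 hH1b).1
      have hden : 0 < 2 * (k / β) - 1 := by linarith
      have := (lt_div_iff₀ hden).1 hk1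
      nlinarith
    · have h0 : 0 ≤ ((k / β) / 2 - 1) * k / (k / β) ^ 2 :=
        div_nonneg (mul_nonneg (by linarith) hk.le) (sq_nonneg _)
      linarith
  -- θ₁ bounds in the form needed for the energy estimate
  have hθu : θ₁ ≤ 3 / 2 * (lam + k) - (k + β) * (k / β) := by
    have e : 3 / 2 * (lam + k) - (k + β) * (k / β) = 3 / 2 * lam - (k / β - 1 / 2) * k := by
      field_simp; ring
    rw [e, hθ₁]; exact min_le_left _ _
  have hθv : θ₁ ≤ lam / 2 := by
    rw [hθ₁]; exact le_trans (min_le_right _ _) (min_le_left _ _)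
  have hθz : θ₁ ≤ 3 / 2 * (lam + β) - (k + β) / (k / β) := by
    have e : 3 / 2 * (lam + β) - (k + β) / (k / β)
        = 3 / 2 * lam + ((k / β) / 2 - 1) * k / (k / β) ^ 2 := by
      field_simp; ring
    rw [e, hθ₁]; exact le_trans (min_le_right _ _) (min_le_right _ _)
  -- the energy function
  set y : ℝ → ℝ := fun s => α * ‖(φ s).1‖ ^ 2 + ‖(φ s).2.1‖ ^ 2 + α * ‖(φ s).2.2‖ ^ 2 with hy
  have hR0 : 0 ≤ R₀sq := by
    rw [hR₀sq]
    have t1 : (0:ℝ) ≤ 2 * α * κ * c₁ ^ 2 * π ^ 2 / (lam + k) * ‖b₁‖ ^ 2 :=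
      mul_nonneg (div_nonneg (by positivity) (by linarith)) (sq_nonneg _)
    have t2 : (0:ℝ) ≤ 2 * κ * c₂ ^ 2 * π ^ 2 / lam * ‖b₂‖ ^ 2 :=
      mul_nonneg (div_nonneg (by positivity) hlam.le) (sq_nonneg _)
    have t3 : (0:ℝ) ≤ 2 * (k / β) * α * κ * c₃ ^ 2 * π ^ 2 / ((k / β) * lam + k) * ‖b₃‖ ^ 2 :=
      mul_nonneg (div_nonneg (by positivity) (by nlinarith)) (sq_nonneg _)
    have t0 : (0:ℝ) ≤ lam * ‖a‖ ^ 2 := mul_nonneg hlam.le (sq_nonneg _)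
    linarith
  -- continuity of y
  have hyc : ContinuousOn y (Ici t₀) := by
    have h1 : ContinuousOn (fun s => (φ s).1) (Ici t₀) := hφc.fst
    have h2 : ContinuousOn (fun s => (φ s).2.1) (Ici t₀) := hφc.snd.fst
    have h3 : ContinuousOn (fun s => (φ s).2.2) (Ici t₀) := hφc.snd.snd
    exact ((continuousOn_const.mul (h1.norm.pow 2)).add (h2.norm.pow 2)).add
      (continuousOn_const.mul (h3.norm.pow 2))
  -- derivative of y
  set D : ℝ → ℝ := fun s => 2 * α * ⟪(φ s).1, (φ' s).1⟫ + 2 * ⟪(φ s).2.1, (φ' s).2.1⟫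
    + 2 * α * ⟪(φ s).2.2, (φ' s).2.2⟫ with hD
  have hyderiv : ∀ t ∈ Ioi t₀, HasDerivAt y (D t) t := by
    intro t ht
    have hder := (hsol t ht).1
    have h1 : HasDerivAt (fun s => (φ s).1) ((φ' t).1) t := by
      exact (ContinuousLinearMap.fst ℝ ell2 (ell2 × ell2)).hasFDerivAt.comp_hasDerivAt
        t hder
    have h23 : HasDerivAt (fun s => (φ s).2) ((φ' t).2) t := by
      exact (ContinuousLinearMap.snd ℝ ell2 (ell2 × ell2)).hasFDerivAt.comp_hasDerivAt
        t hder
    have h2 : HasDerivAt (fun s => (φ s).2.1) ((φ' t).2.1) t := by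
      exact (ContinuousLinearMap.fst ℝ ell2 ell2).hasFDerivAt.comp_hasDerivAt t h23
    have h3 : HasDerivAt (fun s => (φ s).2.2) ((φ' t).2.2) t := by
      exact (ContinuousLinearMap.snd ℝ ell2 ell2).hasFDerivAt.comp_hasDerivAt t h23
    have hcomb := (((gs_hasDerivAt_normSq h1).const_mul α).add (gs_hasDerivAt_normSq h2)).add
      ((gs_hasDerivAt_normSq h3).const_mul α)
    have e : α * (2 * ⟪(φ t).1, (φ' t).1⟫) + 2 * ⟪(φ t).2.1, (φ' t).2.1⟫
        + α * (2 * ⟪(φ t).2.2, (φ' t).2.2⟫) = D t := by rw [hD]; ring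
    rw [hy]; rw [← e]; exact hcomb
  -- the differential inequality
  have hbound : ∀ t ∈ Ioi t₀, D t ≤ -θ₁ * y t + R₀sq := by
    intro t ht
    have hODE := (hsol t ht).2
    have hg1 : ∀ m, (b₁ m * f₁ m (θtorus x t σ₀)) ^ 2 ≤ (c₁ ^ 2 * κ * π ^ 2) * b₁ m ^ 2 := by
      intro m
      have h0 : |f₁ m (θtorus x t σ₀)| ≤ c₁ * (Real.sqrt κ * π) := by
        have h := hf₁lip m (θtorus x t σ₀) 0
        rw [hf₁0 m, sub_zero] at h
        exact h.trans (mul_le_mul_of_nonneg_left (tdist_zero_le _) hc₁.le)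
      have hsq : f₁ m (θtorus x t σ₀) ^ 2 ≤ (c₁ * (Real.sqrt κ * π)) ^ 2 := by
        nlinarith [abs_nonneg (f₁ m (θtorus x t σ₀)), sq_abs (f₁ m (θtorus x t σ₀))]
      calc (b₁ m * f₁ m (θtorus x t σ₀)) ^ 2 = f₁ m (θtorus x t σ₀) ^ 2 * b₁ m ^ 2 := by ring
        _ ≤ (c₁ * (Real.sqrt κ * π)) ^ 2 * b₁ m ^ 2 :=
            mul_le_mul_of_nonneg_right hsq (sq_nonneg _)
        _ = c₁ ^ 2 * κ * π ^ 2 * b₁ m ^ 2 := by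
            rw [mul_pow, mul_pow, Real.sq_sqrt (Nat.cast_nonneg κ)]; ring
    have hg2 : ∀ m, (b₂ m * f₂ m (θtorus x t σ₀)) ^ 2 ≤ (c₂ ^ 2 * κ * π ^ 2) * b₂ m ^ 2 := by
      intro m
      have h0 : |f₂ m (θtorus x t σ₀)| ≤ c₂ * (Real.sqrt κ * π) := by
        have h := hf₂lip m (θtorus x t σ₀) 0
        rw [hf₂0 m, sub_zero] at h
        exact h.trans (mul_le_mul_of_nonneg_left (tdist_zero_le _) hc₂.le)
      have hsq : f₂ m (θtorus x t σ₀) ^ 2 ≤ (c₂ * (Real.sqrt κ * π)) ^ 2 := by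
        nlinarith [abs_nonneg (f₂ m (θtorus x t σ₀)), sq_abs (f₂ m (θtorus x t σ₀))]
      calc (b₂ m * f₂ m (θtorus x t σ₀)) ^ 2 = f₂ m (θtorus x t σ₀) ^ 2 * b₂ m ^ 2 := by ring
        _ ≤ (c₂ * (Real.sqrt κ * π)) ^ 2 * b₂ m ^ 2 :=
            mul_le_mul_of_nonneg_right hsq (sq_nonneg _)
        _ = c₂ ^ 2 * κ * π ^ 2 * b₂ m ^ 2 := by
            rw [mul_pow, mul_pow, Real.sq_sqrt (Nat.cast_nonneg κ)]; ring
    have hg3 : ∀ m, (b₃ m * f₃ m (θtorus x t σ₀)) ^ 2 ≤ (c₃ ^ 2 * κ * π ^ 2) * b₃ m ^ 2 := by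
      intro m
      have h0 : |f₃ m (θtorus x t σ₀)| ≤ c₃ * (Real.sqrt κ * π) := by
        have h := hf₃lip m (θtorus x t σ₀) 0
        rw [hf₃0 m, sub_zero] at h
        exact h.trans (mul_le_mul_of_nonneg_left (tdist_zero_le _) hc₃.le)
      have hsq : f₃ m (θtorus x t σ₀) ^ 2 ≤ (c₃ * (Real.sqrt κ * π)) ^ 2 := by
        nlinarith [abs_nonneg (f₃ m (θtorus x t σ₀)), sq_abs (f₃ m (θtorus x t σ₀))]
      calc (b₃ m * f₃ m (θtorus x t σ₀)) ^ 2 = f₃ m (θtorus x t σ₀) ^ 2 * b₃ m ^ 2 := by ring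
        _ ≤ (c₃ * (Real.sqrt κ * π)) ^ 2 * b₃ m ^ 2 :=
            mul_le_mul_of_nonneg_right hsq (sq_nonneg _)
        _ = c₃ ^ 2 * κ * π ^ 2 * b₃ m ^ 2 := by
            rw [mul_pow, mul_pow, Real.sq_sqrt (Nat.cast_nonneg κ)]; ring
    have hkey := gs_energy_inner_bound d₁ d₂ d₃ k α β lam θ₁ (k / β)
      (c₁ ^ 2 * κ * π ^ 2) (c₂ ^ 2 * κ * π ^ 2) (c₃ ^ 2 * κ * π ^ 2)
      hd₁ hd₂ hd₃ hk hα hβ hlam rfl hθu hθv hθz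
      a b₁ b₂ b₃ (φ t).1 (φ t).2.1 (φ t).2.2 (φ' t).1 (φ' t).2.1 (φ' t).2.2
      (fun m => b₁ m * f₁ m (θtorus x t σ₀)) (fun m => b₂ m * f₂ m (θtorus x t σ₀))
      (fun m => b₃ m * f₃ m (θtorus x t σ₀))
      (by positivity) (by positivity) (by positivity)
      hg1 hg2 hg3
      (fun m => (hODE m).1) (fun m => (hODE m).2.1) (fun m => (hODE m).2.2)
    refine le_trans hkey (le_of_eq ?_)
    simp only [hy, hR₀sq]
    have hden : (k / β) * lam + k ≠ 0 := by
      have : 0 < (k / β) * lam + k := by positivity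
      exact ne_of_gt this
    have hlk : lam + k ≠ 0 := by linarith
    have hlb : lam + β ≠ 0 := by linarith
    field_simp
  -- the main Grönwall estimate
  have key1 : ∀ t ≥ t₀, y t ≤ Real.exp (-θ₁ * (t - t₀)) * y t₀ + R₀sq / θ₁ := by
    intro t ht
    rcases eq_or_lt_of_le ht with rfl | hlt
    · rw [sub_self, mul_zero, Real.exp_zero, one_mul]
      have : 0 ≤ R₀sq / θ₁ := div_nonneg hR0 hθ₁pos.le
      linarith
    · have hstep : ∀ s ∈ Ioc t₀ t, y t ≤ Real.exp (-θ₁ * (t - s)) * y s + R₀sq / θ₁ := by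
        intro s hs
        have hcont : ContinuousOn y (Icc s t) :=
          hyc.mono fun w hw => le_trans hs.1.le hw.1
        have hG := le_gronwallBound_of_liminf_deriv_right_le (f := y) (f' := D)
          (δ := y s) (K := -θ₁) (ε := R₀sq) (a := s) (b := t) hcont
          (fun w hw r hr => by
            have hD := ((hyderiv w (lt_of_lt_of_le hs.1 hw.1)).hasDerivWithinAt
              (s := Ici w)).liminf_right_slope_le hr
            refine hD.mono fun u hu => ?_
            rwa [slope_def_field, div_eq_inv_mul] at hu)
          (le_refl _)
          (fun w hw => hbound w (lt_of_lt_of_le hs.1 hw.1))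
          t ⟨hs.2, le_refl t⟩
        have hKne : (-θ₁) ≠ 0 := neg_ne_zero.2 (ne_of_gt hθ₁pos)
        rw [gronwallBound_of_K_ne_0 hKne] at hG
        replace hG : y t ≤ y s * Real.exp (-θ₁ * (t - s))
            + R₀sq / -θ₁ * (Real.exp (-θ₁ * (t - s)) - 1) := hG
        have hts : 0 ≤ t - s := by linarith [hs.2]
        have hexp1 : Real.exp (-θ₁ * (t - s)) ≤ 1 := by
          rw [Real.exp_le_one_iff]
          nlinarith
        have hdivnn : 0 ≤ R₀sq / θ₁ := div_nonneg hR0 hθ₁pos.le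
        have e : y s * Real.exp (-θ₁ * (t - s)) + R₀sq / (-θ₁) * (Real.exp (-θ₁ * (t - s)) - 1)
            = Real.exp (-θ₁ * (t - s)) * y s + R₀sq / θ₁ * (1 - Real.exp (-θ₁ * (t - s))) := by
          rw [div_neg]; ring
        rw [e] at hG
        have : R₀sq / θ₁ * (1 - Real.exp (-θ₁ * (t - s))) ≤ R₀sq / θ₁ := by
          nlinarith [Real.exp_pos (-θ₁ * (t - s))]
        linarith
      have htend : Tendsto (fun s => Real.exp (-θ₁ * (t - s)) * y s + R₀sq / θ₁) (𝓝[>] t₀)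
          (𝓝 (Real.exp (-θ₁ * (t - t₀)) * y t₀ + R₀sq / θ₁)) := by
        refine Tendsto.add (Tendsto.mul ?_ ?_) tendsto_const_nhds
        · have hc : Continuous fun s : ℝ => Real.exp (-θ₁ * (t - s)) :=
            (continuous_const.mul (continuous_const.sub continuous_id)).rexp
          exact (hc.tendsto t₀).mono_left nhdsWithin_le_nhds
        · exact ((hyc t₀ self_mem_Ici).tendsto).mono_left
            (nhdsWithin_mono _ Ioi_subset_Ici_self)
      refine ge_of_tendsto htend ?_
      filter_upwards [Ioc_mem_nhdsGT_of_mem ⟨le_refl t₀, hlt⟩] with s hs using hstep s hs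
  refine ⟨hθ₁pos, key1, ?_⟩
  -- the consequence for the E-norm
  intro t ht
  have h1 := key1 t ht
  have hδ1 : 0 < min 1 α := lt_min one_pos hα
  have hexp : 0 < Real.exp (-θ₁ * (t - t₀)) := Real.exp_pos _
  have hlow : min 1 α * enormSq (φ t) ≤ y t := by
    rw [hy]; simp only [enormSq]
    have e1 : min 1 α * ‖(φ t).1‖ ^ 2 ≤ α * ‖(φ t).1‖ ^ 2 :=
      mul_le_mul_of_nonneg_right (min_le_right 1 α) (sq_nonneg _)
    have e2 : min 1 α * ‖(φ t).2.1‖ ^ 2 ≤ 1 * ‖(φ t).2.1‖ ^ 2 :=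
      mul_le_mul_of_nonneg_right (min_le_left 1 α) (sq_nonneg _)
    have e3 : min 1 α * ‖(φ t).2.2‖ ^ 2 ≤ α * ‖(φ t).2.2‖ ^ 2 :=
      mul_le_mul_of_nonneg_right (min_le_right 1 α) (sq_nonneg _)
    linarith
  have hup : y t₀ ≤ max 1 α * enormSq (φ t₀) := by
    rw [hy]; simp only [enormSq]
    have e1 : α * ‖(φ t₀).1‖ ^ 2 ≤ max 1 α * ‖(φ t₀).1‖ ^ 2 :=
      mul_le_mul_of_nonneg_right (le_max_right 1 α) (sq_nonneg _)
    have e2 : 1 * ‖(φ t₀).2.1‖ ^ 2 ≤ max 1 α * ‖(φ t₀).2.1‖ ^ 2 :=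
      mul_le_mul_of_nonneg_right (le_max_left 1 α) (sq_nonneg _)
    have e3 : α * ‖(φ t₀).2.2‖ ^ 2 ≤ max 1 α * ‖(φ t₀).2.2‖ ^ 2 :=
      mul_le_mul_of_nonneg_right (le_max_right 1 α) (sq_nonneg _)
    linarith
  have hchain : min 1 α * enormSq (φ t)
      ≤ Real.exp (-θ₁ * (t - t₀)) * (max 1 α * enormSq (φ t₀)) + R₀sq / θ₁ := by
    have h2 := mul_le_mul_of_nonneg_left hup hexp.le
    exact hlow.trans (h1.trans (add_le_add_left h2 _))
  rw [← le_div_iff₀' hδ1] at hchain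
  refine hchain.trans (le_of_eq ?_)
  have hθ0 : θ₁ ≠ 0 := ne_of_gt hθ₁pos
  have hm0 : min 1 α ≠ 0 := ne_of_gt hδ1
  field_simp
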